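/- Let (M,f) be a symmetric bilinear lattice. The cokernel of the inclusion of the torsion subgroup T Coker(f̂) into Coker(f̂) is isomorphic to Hom(Ker f̂, ℤ). -/

import Mathlib

/-- The cokernel of the inclusion `T Coker(f̂) ↪ Coker(f̂)` is isomorphic to
`Hom(Ker f̂, ℤ)`. -/
theorem stmt15 {M : Type*} [AddCommGroup M] [Module.Free ℤ M] [Module.Finite ℤ M]
    (f : M →ₗ[ℤ] M →ₗ[ℤ] ℤ) (hsymm : ∀ x y : M, f x y = f y x) :
    Nonempty
      ((((M →ₗ[ℤ] ℤ) ⧸ LinearMap.range f) ⧸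
          Submodule.torsion ℤ ((M →ₗ[ℤ] ℤ) ⧸ LinearMap.range f)) ≃ₗ[ℤ]
        (↥(LinearMap.ker f) →ₗ[ℤ] ℤ)) := by
  set Q := (M →ₗ[ℤ] ℤ) ⧸ LinearMap.range f
  -- rank computations (as cardinals)
  have r1 : Module.rank ℤ (Q ⧸ Submodule.torsion ℤ Q) = Module.rank ℤ Q :=
    rank_quotient_eq_of_le_torsion le_rfl
  have r2 : Module.rank ℤ Q + Module.rank ℤ (LinearMap.range f)
      = Module.rank ℤ (M →ₗ[ℤ] ℤ) :=
    Submodule.rank_quotient_add_rank (LinearMap.range f)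
  have r3 : Module.rank ℤ (LinearMap.range f) + Module.rank ℤ (LinearMap.ker f)
      = Module.rank ℤ M := LinearMap.rank_range_add_rank_ker f
  have r4 : Module.rank ℤ (M →ₗ[ℤ] ℤ) = Module.rank ℤ M := by
    have := (Module.Free.chooseBasis ℤ M).dual_rank_eq
    simpa [Module.Dual] using this
  have r5 : Module.rank ℤ ((LinearMap.ker f) →ₗ[ℤ] ℤ)
      = Module.rank ℤ (LinearMap.ker f) := by
    have := (Module.Free.chooseBasis ℤ (LinearMap.ker f)).dual_rank_eq
    simpa [Module.Dual] using this
  -- convert to finranks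
  have fr : ∀ (N : Type _) [AddCommGroup N] [Module ℤ N] [Module.Finite ℤ N],
      Module.rank ℤ N = (Module.finrank ℤ N : Cardinal) := by
    intro N _ _ _
    exact (Module.finrank_eq_rank ℤ N).symm
  rw [fr, fr] at r1 r4 r5
  rw [fr, fr, fr] at r2 r3
  have n1 : Module.finrank ℤ (Q ⧸ Submodule.torsion ℤ Q) = Module.finrank ℤ Q := by
    exact_mod_cast r1
  have n2 : Module.finrank ℤ Q + Module.finrank ℤ (LinearMap.range f)
      = Module.finrank ℤ (M →ₗ[ℤ] ℤ) := by exact_mod_cast r2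
  have n3 : Module.finrank ℤ (LinearMap.range f) + Module.finrank ℤ (LinearMap.ker f)
      = Module.finrank ℤ M := by exact_mod_cast r3
  have n4 : Module.finrank ℤ (M →ₗ[ℤ] ℤ) = Module.finrank ℤ M := by exact_mod_cast r4
  have n5 : Module.finrank ℤ ((LinearMap.ker f) →ₗ[ℤ] ℤ)
      = Module.finrank ℤ (LinearMap.ker f) := by exact_mod_cast r5
  have key : Module.finrank ℤ (Q ⧸ Submodule.torsion ℤ Q)
      = Module.finrank ℤ ((LinearMap.ker f) →ₗ[ℤ] ℤ) := by omega
  exact FiniteDimensional.nonempty_linearEquiv_of_finrank_eq key
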